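/- Let H be a union of snake subgraphs of a snake graph G arising as the symmetric difference P ⊖ P_min for some perfect matching P of G. Then the restriction of P_min to each connected component of H is the minimal perfect matching of that component; consequently, replacing P_min restricted to H by any perfect matching of H inside P_min yields a perfect matching of G. -/

import Mathlib

/-- A position in the integer grid; tiles are unit squares with a given south-west corner. -/
abbrev Pos : Type := ℤ × ℤ

/-- An edge of the grid: a base vertex together with a direction
(`true` = horizontal edge to the east, `false` = vertical edge to the north). -/
abbrev SEdge : Type := Pos × Bool

/-- The two endpoints of an edge. -/
def edgeVerts (e : SEdge) : Finset Pos :=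
  {e.1, if e.2 then (e.1.1 + 1, e.1.2) else (e.1.1, e.1.2 + 1)}

/-- The four edges of the unit-square tile whose south-west corner is `p`:
bottom, left, right and top edges. -/
def tileEdges (p : Pos) : Finset SEdge :=
  {(p, true), (p, false), ((p.1 + 1, p.2), false), ((p.1, p.2 + 1), true)}

/-- The four vertices of the tile with south-west corner `p`. -/
def tileVerts (p : Pos) : Finset Pos := (tileEdges p).biUnion edgeVerts

/-- The list of south-west corners of the tiles of a snake graph built from gluing data `g`
(`true` = the next tile is glued to the right edge, `false` = glued to the top edge),
starting at position `p`. -/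
def tilePosFrom : List Bool → Pos → List Pos
  | [], p => [p]
  | b :: g, p => p :: tilePosFrom g (if b then (p.1 + 1, p.2) else (p.1, p.2 + 1))

/-- The tiles of the snake graph with gluing data `g`; a snake graph with `n + 1` tiles
corresponds to `g` of length `n`. -/
def snakeTiles (g : List Bool) : List Pos := tilePosFrom g (0, 0)

/-- The edge set of the snake graph with gluing data `g`. -/
def snakeEdges (g : List Bool) : Finset SEdge :=
  (snakeTiles g).toFinset.biUnion tileEdges

/-- The vertex set of the snake graph with gluing data `g`. -/
def snakeVerts (g : List Bool) : Finset Pos := (snakeEdges g).biUnion edgeVerts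

/-- `P` is a perfect matching of the graph with edge set `E`: a subset of the edges such
that every vertex is incident to exactly one edge of `P`. -/
def IsPM (E P : Finset SEdge) : Prop :=
  P ⊆ E ∧ ∀ v ∈ E.biUnion edgeVerts, ∃! e, e ∈ P ∧ v ∈ edgeVerts e

/-- The boundary edges of the snake graph: edges lying in exactly one tile. -/
def boundary (g : List Bool) : Finset SEdge :=
  (snakeEdges g).filter
    (fun e => (snakeTiles g).countP (fun p => decide (e ∈ tileEdges p)) = 1)

/-- `P` is the minimal perfect matching of the snake graph with gluing data `g`:
the perfect matching consisting only of boundary edges which contains the bottom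
edge of the first tile. -/
def IsMinPM (g : List Bool) (P : Finset SEdge) : Prop :=
  IsPM (snakeEdges g) P ∧ P ⊆ boundary g ∧ (((0 : ℤ), (0 : ℤ)), true) ∈ P

/-- The tiles of the snake subgraph of `g` consisting of the consecutive tiles
`a, a+1, …, b`. -/
def subTiles (g : List Bool) (a b : ℕ) : List Pos := ((snakeTiles g).drop a).take (b + 1 - a)

/-- The edge set of the snake subgraph of `g` on the consecutive tiles `a, …, b`. -/
def subEdges (g : List Bool) (a b : ℕ) : Finset SEdge :=
  (subTiles g a b).toFinset.biUnion tileEdges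

/-- The boundary cycle of the snake subgraph on tiles `a, …, b`: its edges lying in
exactly one of these tiles. -/
def subBoundary (g : List Bool) (a b : ℕ) : Finset SEdge :=
  (subEdges g a b).filter
    (fun e => (subTiles g a b).countP (fun p => decide (e ∈ tileEdges p)) = 1)

lemma length_tilePosFrom : ∀ (g : List Bool) (p : Pos), (tilePosFrom g p).length = g.length + 1
  | [], p => rfl
  | b :: g, p => by simp [tilePosFrom, length_tilePosFrom g]

lemma sum_tilePosFrom : ∀ (g : List Bool) (p : Pos) (i : ℕ) (hi : i < (tilePosFrom g p).length),
    (tilePosFrom g p)[i].1 + (tilePosFrom g p)[i].2 = p.1 + p.2 + i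
  | [], p, i, hi => by
    simp [tilePosFrom, length_tilePosFrom] at hi
    subst hi; simp [tilePosFrom]
  | b :: g, p, 0, hi => by simp [tilePosFrom]
  | b :: g, p, i + 1, hi => by
    have := sum_tilePosFrom g (if b then (p.1 + 1, p.2) else (p.1, p.2 + 1)) i
      (by simpa [tilePosFrom, length_tilePosFrom] using hi)
    simp only [tilePosFrom, List.getElem_cons_succ]
    rw [this]
    cases b <;> simp <;> ring

lemma step_tilePosFrom : ∀ (g : List Bool) (p : Pos) (i : ℕ) (hi : i + 1 < (tilePosFrom g p).length),
    (tilePosFrom g p)[i + 1] = ((tilePosFrom g p)[i].1 + 1, (tilePosFrom g p)[i].2) ∨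
    (tilePosFrom g p)[i + 1] = ((tilePosFrom g p)[i].1, (tilePosFrom g p)[i].2 + 1)
  | [], p, i, hi => by simp [tilePosFrom] at hi
  | b :: g, p, 0, hi => by
    have h0 : (tilePosFrom g (if b then (p.1 + 1, p.2) else (p.1, p.2 + 1)))[0]'(by
      simp [length_tilePosFrom]) = (if b then (p.1 + 1, p.2) else (p.1, p.2 + 1)) := by
      cases g <;> simp [tilePosFrom]
    simp only [tilePosFrom, List.getElem_cons_succ, List.getElem_cons_zero, h0]
    cases b <;> simp
  | b :: g, p, i + 1, hi => by
    have := step_tilePosFrom g (if b then (p.1 + 1, p.2) else (p.1, p.2 + 1)) i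
      (by simpa [tilePosFrom, length_tilePosFrom] using hi)
    simpa [tilePosFrom] using this

lemma mem_tileEdges_iff (e : SEdge) (t : Pos) :
    e ∈ tileEdges t ↔ t = e.1 ∨ t = (if e.2 then (e.1.1, e.1.2 - 1) else (e.1.1 - 1, e.1.2)) := by
  obtain ⟨⟨x, y⟩, d⟩ := e
  obtain ⟨a, b⟩ := t
  cases d <;> simp [tileEdges, Prod.ext_iff] <;> constructor <;> rintro (h | h) <;> omega

lemma edges_at (v : Pos) (e : SEdge) : v ∈ edgeVerts e ↔
    e = (v, true) ∨ e = (v, false) ∨ e = ((v.1 - 1, v.2), true) ∨ e = ((v.1, v.2 - 1), false) := by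
  obtain ⟨⟨x, y⟩, d⟩ := e
  obtain ⟨a, b⟩ := v
  cases d <;> simp [edgeVerts, Prod.ext_iff] <;> constructor <;> rintro (h | h) <;> omega

def IsSnakeList (L : List Pos) (s0 : ℤ) : Prop :=
  (∀ i (hi : i < L.length), (L[i].1 + L[i].2) = s0 + i) ∧
  (∀ i (hi : i + 1 < L.length), L[i + 1] = (L[i].1 + 1, L[i].2) ∨ L[i + 1] = (L[i].1, L[i].2 + 1))

lemma IsSnakeList.sum_mem {L : List Pos} {s0 : ℤ} (h : IsSnakeList L s0) {t : Pos} (ht : t ∈ L) :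
    ∃ i, ∃ hi : i < L.length, L[i] = t ∧ t.1 + t.2 = s0 + i := by
  obtain ⟨i, hi, rfl⟩ := List.mem_iff_getElem.1 ht
  exact ⟨i, hi, rfl, h.1 i hi⟩

lemma IsSnakeList.eq_of_sum {L : List Pos} {s0 : ℤ} (h : IsSnakeList L s0) {t t' : Pos}
    (ht : t ∈ L) (ht' : t' ∈ L) (hs : t.1 + t.2 = t'.1 + t'.2) : t = t' := by
  obtain ⟨i, hi, hti, hsi⟩ := h.sum_mem ht
  obtain ⟨j, hj, htj, hsj⟩ := h.sum_mem ht'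
  have : i = j := by omega
  subst this; rw [← hti, htj]

lemma IsSnakeList.nodup {L : List Pos} {s0 : ℤ} (h : IsSnakeList L s0) : L.Nodup := by
  rw [List.nodup_iff_injective_getElem]
  rintro ⟨i, hi⟩ ⟨j, hj⟩ hij
  have h1 := h.1 i hi
  have h2 := h.1 j hj
  simp only at hij
  rw [hij] at h1
  simp only [Fin.mk.injEq]
  omega

lemma IsSnakeList.succ_mem {L : List Pos} {s0 : ℤ} (h : IsSnakeList L s0) {t t' : Pos}
    (ht : t ∈ L) (ht' : t' ∈ L) (hs : t'.1 + t'.2 = t.1 + t.2 + 2) :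
    (t.1 + 1, t.2) ∈ L ∨ (t.1, t.2 + 1) ∈ L := by
  obtain ⟨i, hi, hti, hsi⟩ := h.sum_mem ht
  obtain ⟨j, hj, htj, hsj⟩ := h.sum_mem ht'
  have hi1 : i + 1 < L.length := by omega
  rcases h.2 i hi1 with hst | hst
  · left; rw [hti] at hst; rw [← hst]; exact List.getElem_mem hi1
  · right; rw [hti] at hst; rw [← hst]; exact List.getElem_mem hi1

lemma countP_pair (a b : Pos) (hab : a ≠ b) (pred : Pos → Bool)
    (hpred : ∀ t, pred t = true ↔ (t = a ∨ t = b)) :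
    ∀ L : List Pos, L.Nodup →
      L.countP pred = (if a ∈ L then 1 else 0) + (if b ∈ L then 1 else 0)
  | [], _ => by simp
  | x :: l, hnd => by
    obtain ⟨hx, hl⟩ := List.nodup_cons.1 hnd
    rw [List.countP_cons, countP_pair a b hab pred hpred l hl]
    by_cases hxa : x = a <;> by_cases hxb : x = b
    · exact absurd (hxa ▸ hxb : a = b) hab
    · subst hxa
      simp [hpred, hx, List.mem_cons, Ne.symm hab, hxb]
      omega
    · subst hxb
      simp [hpred, hx, List.mem_cons, hab, hxa]
    · simp [hpred, hxa, hxb, List.mem_cons, Ne.symm hxa, Ne.symm hxb]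

lemma degree_two (L : List Pos) (s0 : ℤ) (h : IsSnakeList L s0) (v : Pos)
    (hv : v ∈ (L.toFinset.biUnion tileEdges).biUnion edgeVerts) :
    (((L.toFinset.biUnion tileEdges).filter
        (fun e => L.countP (fun p => decide (e ∈ tileEdges p)) = 1)).filter
      (fun e => v ∈ edgeVerts e)).card = 2 := by
  classical
  obtain ⟨a, b⟩ := v
  -- candidate tiles
  have hc01 : ((a, b) : Pos) ≠ (a - 1, b) := by simp [Prod.ext_iff]; omega
  have hc02 : ((a, b) : Pos) ≠ (a, b - 1) := by simp [Prod.ext_iff]; omega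
  have hc13 : ((a - 1, b) : Pos) ≠ (a - 1, b - 1) := by simp [Prod.ext_iff]; omega
  have hc23 : ((a, b - 1) : Pos) ≠ (a - 1, b - 1) := by simp [Prod.ext_iff]; omega
  -- counts of the four edges at v
  have cntE : L.countP (fun p => decide ((((a, b) : Pos), true) ∈ tileEdges p))
      = (if ((a, b) : Pos) ∈ L then 1 else 0) + (if ((a, b - 1) : Pos) ∈ L then 1 else 0) := by
    refine countP_pair _ _ hc02 _ (fun t => ?_) L h.nodup
    simp [mem_tileEdges_iff]
  have cntN : L.countP (fun p => decide ((((a, b) : Pos), false) ∈ tileEdges p))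
      = (if ((a, b) : Pos) ∈ L then 1 else 0) + (if ((a - 1, b) : Pos) ∈ L then 1 else 0) := by
    refine countP_pair _ _ hc01 _ (fun t => ?_) L h.nodup
    simp [mem_tileEdges_iff]
  have cntW : L.countP (fun p => decide ((((a - 1, b) : Pos), true) ∈ tileEdges p))
      = (if ((a - 1, b) : Pos) ∈ L then 1 else 0) + (if ((a - 1, b - 1) : Pos) ∈ L then 1 else 0) := by
    refine countP_pair _ _ hc13 _ (fun t => ?_) L h.nodup
    simp [mem_tileEdges_iff]
  have cntS : L.countP (fun p => decide ((((a, b - 1) : Pos), false) ∈ tileEdges p))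
      = (if ((a, b - 1) : Pos) ∈ L then 1 else 0) + (if ((a - 1, b - 1) : Pos) ∈ L then 1 else 0) := by
    refine countP_pair _ _ hc23 _ (fun t => ?_) L h.nodup
    simp [mem_tileEdges_iff]
  -- the filter is a filter of the four candidate edges
  have hset : (((L.toFinset.biUnion tileEdges).filter
        (fun e => L.countP (fun p => decide (e ∈ tileEdges p)) = 1)).filter
      (fun e => ((a, b) : Pos) ∈ edgeVerts e))
      = ({(((a, b) : Pos), true), (((a, b) : Pos), false), (((a - 1, b) : Pos), true),
          (((a, b - 1) : Pos), false)} : Finset SEdge).filter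
        (fun e => L.countP (fun p => decide (e ∈ tileEdges p)) = 1) := by
    ext e
    simp only [Finset.mem_filter, Finset.mem_biUnion, List.mem_toFinset, Finset.mem_insert,
      Finset.mem_singleton]
    constructor
    · rintro ⟨⟨-, hcnt⟩, hve⟩
      exact ⟨(edges_at _ e).1 hve, hcnt⟩
    · rintro ⟨he4, hcnt⟩
      refine ⟨⟨?_, hcnt⟩, ?_⟩
      · have hpos : 0 < L.countP (fun p => decide (e ∈ tileEdges p)) := by omega
        obtain ⟨t, htL, hte⟩ := List.countP_pos_iff.1 hpos
        exact ⟨t, htL, by simpa using hte⟩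
      · rcases he4 with rfl | rfl | rfl | rfl <;> simp [edgeVerts, Prod.ext_iff]
  rw [hset, Finset.card_filter]
  have d1 : ((((a, b) : Pos), true) : SEdge) ≠ (((a, b) : Pos), false) := by simp
  have d2 : ((((a, b) : Pos), true) : SEdge) ≠ (((a - 1, b) : Pos), true) := by
    simp [Prod.ext_iff]; omega
  have d3 : ((((a, b) : Pos), true) : SEdge) ≠ (((a, b - 1) : Pos), false) := by simp
  have d4 : ((((a, b) : Pos), false) : SEdge) ≠ (((a - 1, b) : Pos), true) := by simp
  have d5 : ((((a, b) : Pos), false) : SEdge) ≠ (((a, b - 1) : Pos), false) := by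
    simp [Prod.ext_iff]; omega
  have d6 : ((((a - 1, b) : Pos), true) : SEdge) ≠ (((a, b - 1) : Pos), false) := by simp
  rw [Finset.sum_insert (by simp [d1, d2, d3]), Finset.sum_insert (by simp [d4, d5]),
    Finset.sum_insert (by simp [d6]), Finset.sum_singleton]
  rw [cntE, cntN, cntW, cntS]
  -- structural constraints
  have h12 : ¬(((a - 1, b) : Pos) ∈ L ∧ ((a, b - 1) : Pos) ∈ L) := by
    rintro ⟨h1, h2⟩
    have := h.eq_of_sum h1 h2 (by simp; ring)
    simp [Prod.ext_iff] at this
  have h03 : ((a, b) : Pos) ∈ L → ((a - 1, b - 1) : Pos) ∈ L →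
      (((a - 1, b) : Pos) ∈ L ∨ ((a, b - 1) : Pos) ∈ L) := by
    intro h0 h3
    rcases h.succ_mem h3 h0 (by simp; ring) with hm | hm
    · right
      have : ((a - 1 + 1, b - 1) : Pos) = (a, b - 1) := by simp [Prod.ext_iff]
      rwa [this] at hm
    · left
      have : ((a - 1, b - 1 + 1) : Pos) = (a - 1, b) := by simp [Prod.ext_iff]
      rwa [this] at hm
  have hex : ((a, b) : Pos) ∈ L ∨ ((a - 1, b) : Pos) ∈ L ∨ ((a, b - 1) : Pos) ∈ L ∨
      ((a - 1, b - 1) : Pos) ∈ L := by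
    simp only [Finset.mem_biUnion, List.mem_toFinset] at hv
    obtain ⟨e, ⟨t, htL, hte⟩, hve⟩ := hv
    rcases (edges_at _ e).1 hve with rfl | rfl | rfl | rfl <;>
      rcases (mem_tileEdges_iff _ t).1 hte with rfl | h' <;> simp_all <;> tauto
  by_cases h0 : ((a, b) : Pos) ∈ L <;> by_cases h1 : ((a - 1, b) : Pos) ∈ L <;>
    by_cases h2 : ((a, b - 1) : Pos) ∈ L <;> by_cases h3 : ((a - 1, b - 1) : Pos) ∈ L <;>
    simp [h0, h1, h2, h3] at h12 h03 hex ⊢ <;> tauto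


lemma snakeTiles_isSnakeList (g : List Bool) : IsSnakeList (snakeTiles g) 0 := by
  constructor
  · intro i hi
    have := sum_tilePosFrom g (0, 0) i hi
    exact this.trans (by simp)
  · intro i hi
    exact step_tilePosFrom g (0, 0) i hi

lemma length_subTiles (g : List Bool) (a b : ℕ) (hab : a ≤ b) (hb : b < (snakeTiles g).length) :
    (subTiles g a b).length = b + 1 - a := by
  simp [subTiles]
  omega

lemma getElem_subTiles (g : List Bool) (a b : ℕ) (i : ℕ) (hi : i < (subTiles g a b).length) :
    (subTiles g a b)[i] = (snakeTiles g)[a + i]'(by simp [subTiles] at hi; omega) := by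
  simp only [subTiles]
  rw [List.getElem_take, List.getElem_drop]

lemma subTiles_isSnakeList (g : List Bool) (a b : ℕ) :
    IsSnakeList (subTiles g a b) (a : ℤ) := by
  have hs := snakeTiles_isSnakeList g
  constructor
  · intro i hi
    rw [getElem_subTiles g a b i hi]
    have hlen : a + i < (snakeTiles g).length := by simp [subTiles] at hi; omega
    have := hs.1 (a + i) hlen
    push_cast at this ⊢
    omega
  · intro i hi
    have hlen : a + i + 1 < (snakeTiles g).length := by simp [subTiles] at hi; omega
    rw [getElem_subTiles g a b i (by omega), getElem_subTiles g a b (i + 1) hi]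
    have := hs.2 (a + i) hlen
    exact this

lemma sum_of_mem_subTiles (g : List Bool) (a b : ℕ) (hb : b < (snakeTiles g).length)
    {t : Pos} (ht : t ∈ subTiles g a b) : (a : ℤ) ≤ t.1 + t.2 ∧ t.1 + t.2 ≤ (b : ℤ) := by
  obtain ⟨i, hi, hti, hsi⟩ := (subTiles_isSnakeList g a b).sum_mem ht
  have : i < b + 1 - a := by simp [subTiles] at hi; omega
  constructor <;> push_cast at hsi ⊢ <;> omega

lemma sum_of_mem_tileEdges {e : SEdge} {t : Pos} (h : e ∈ tileEdges t) :
    t.1 + t.2 = e.1.1 + e.1.2 ∨ t.1 + t.2 = e.1.1 + e.1.2 - 1 := by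
  rcases (mem_tileEdges_iff e t).1 h with rfl | rfl
  · left; rfl
  · cases hb : e.2 <;> simp [hb] <;> omega

lemma subTiles_subset (g : List Bool) (a b : ℕ) {t : Pos} (ht : t ∈ subTiles g a b) :
    t ∈ snakeTiles g :=
  List.mem_of_mem_drop (List.mem_of_mem_take ht)

lemma subEdges_subset (g : List Bool) (a b : ℕ) : subEdges g a b ⊆ snakeEdges g := by
  intro e he
  simp only [subEdges, snakeEdges, Finset.mem_biUnion, List.mem_toFinset] at he ⊢
  obtain ⟨t, htL, hte⟩ := he
  exact ⟨t, subTiles_subset g a b htL, hte⟩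

lemma subEdges_disjoint (g : List Bool) {q r : ℕ × ℕ}
    (hq : q.2 < (snakeTiles g).length) (hr : r.2 < (snakeTiles g).length)
    (hsep : q.2 + 1 < r.1 ∨ r.2 + 1 < q.1) :
    Disjoint (subEdges g q.1 q.2) (subEdges g r.1 r.2) := by
  rw [Finset.disjoint_left]
  intro e he1 he2
  simp only [subEdges, Finset.mem_biUnion, List.mem_toFinset] at he1 he2
  obtain ⟨t, htL, hte⟩ := he1
  obtain ⟨t', htL', hte'⟩ := he2
  have hs1 := sum_of_mem_subTiles g q.1 q.2 hq htL
  have hs2 := sum_of_mem_subTiles g r.1 r.2 hr htL'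
  have he1' := sum_of_mem_tileEdges hte
  have he2' := sum_of_mem_tileEdges hte'
  have hcast : (q.2 : ℤ) + 1 < r.1 ∨ (r.2 : ℤ) + 1 < q.1 := by
    rcases hsep with h | h
    · left; exact_mod_cast h
    · right; exact_mod_cast h
  omega

lemma subBoundary_degree_two (g : List Bool) (a b : ℕ) (v : Pos)
    (hv : v ∈ (subEdges g a b).biUnion edgeVerts) :
    ((subBoundary g a b).filter (fun e => v ∈ edgeVerts e)).card = 2 := by
  have := degree_two (subTiles g a b) (a : ℤ) (subTiles_isSnakeList g a b) v hv
  exact this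

/-- Let `H` be the union of snake subgraphs of a snake graph `G` arising as the symmetric
difference `P ⊖ Pmin` for a perfect matching `P` of `G`.  Then the restriction of `Pmin`
to each connected component of `H` is the minimal perfect matching of that component (in
particular, a perfect matching of the component consisting only of its boundary edges);
consequently, replacing `Pmin` restricted to `H` by any perfect matching of `H` inside
`Pmin` yields a perfect matching of `G`. -/
theorem restriction_of_min_matching_and_replacement (g : List Bool) (Pmin P : Finset SEdge)
    (hmin : IsMinPM g Pmin) (hP : IsPM (snakeEdges g) P)
    (I : Finset (ℕ × ℕ))
    (hIrange : ∀ q ∈ I, q.1 ≤ q.2 ∧ q.2 < (snakeTiles g).length)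
    (hIsep : (I : Set (ℕ × ℕ)).Pairwise fun q r => q.2 + 1 < r.1 ∨ r.2 + 1 < q.1)
    (hIdec : (P ∪ Pmin) \ (P ∩ Pmin) = I.biUnion (fun q => subBoundary g q.1 q.2)) :
    (∀ q ∈ I,
      IsPM (subEdges g q.1 q.2) (Pmin ∩ subEdges g q.1 q.2) ∧
      Pmin ∩ subEdges g q.1 q.2 ⊆ subBoundary g q.1 q.2) ∧
    (∀ Q : ℕ × ℕ → Finset SEdge,
      (∀ q ∈ I, IsPM (subEdges g q.1 q.2) (Q q)) →
      IsPM (snakeEdges g)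
        ((Pmin \ I.biUnion (fun q => subEdges g q.1 q.2)) ∪ I.biUnion Q)) := by
  classical
  obtain ⟨⟨hPminE, hPminU⟩, hPminB, hPmin0⟩ := hmin
  obtain ⟨hPE, hPU⟩ := hP
  have hDsub : ∀ q ∈ I, subBoundary g q.1 q.2 ⊆ (P ∪ Pmin) \ (P ∩ Pmin) := by
    intro q hq e he
    rw [hIdec]
    exact Finset.mem_biUnion.2 ⟨q, hq, he⟩
  have hsubB : ∀ (a b : ℕ), subBoundary g a b ⊆ subEdges g a b := fun a b =>
    Finset.filter_subset _ _
  have hvertsub : ∀ (a b : ℕ), ∀ v ∈ (subEdges g a b).biUnion edgeVerts,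
      v ∈ (snakeEdges g).biUnion edgeVerts := by
    intro a b v hv
    simp only [Finset.mem_biUnion] at hv ⊢
    obtain ⟨e, he, hve⟩ := hv
    exact ⟨e, subEdges_subset g a b he, hve⟩
  have key : ∀ q ∈ I, ∀ v ∈ (subEdges g q.1 q.2).biUnion edgeVerts,
      ∃ f, (f ∈ Pmin ∧ v ∈ edgeVerts f) ∧ f ∈ subBoundary g q.1 q.2 := by
    intro q hq v hv
    have hdeg := subBoundary_degree_two g q.1 q.2 v hv
    obtain ⟨f1, f2, hne, hff⟩ := Finset.card_eq_two.1 hdeg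
    have hf1 : f1 ∈ (subBoundary g q.1 q.2).filter (fun e => v ∈ edgeVerts e) := by
      rw [hff]; simp
    have hf2 : f2 ∈ (subBoundary g q.1 q.2).filter (fun e => v ∈ edgeVerts e) := by
      rw [hff]; simp
    simp only [Finset.mem_filter] at hf1 hf2
    have hvE := hvertsub _ _ v hv
    have hD1 := hDsub q hq hf1.1
    have hD2 := hDsub q hq hf2.1
    rw [Finset.mem_sdiff, Finset.mem_union, Finset.mem_inter] at hD1 hD2
    by_cases h1 : f1 ∈ Pmin
    · exact ⟨f1, ⟨h1, hf1.2⟩, hf1.1⟩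
    · have hf1P : f1 ∈ P := by tauto
      by_cases h2 : f2 ∈ Pmin
      · exact ⟨f2, ⟨h2, hf2.2⟩, hf2.1⟩
      · have hf2P : f2 ∈ P := by tauto
        obtain ⟨eP, -, hePu⟩ := hPU v hvE
        exact absurd ((hePu f1 ⟨hf1P, hf1.2⟩).trans (hePu f2 ⟨hf2P, hf2.2⟩).symm) hne
  have partA : ∀ q ∈ I,
      IsPM (subEdges g q.1 q.2) (Pmin ∩ subEdges g q.1 q.2) ∧
      Pmin ∩ subEdges g q.1 q.2 ⊆ subBoundary g q.1 q.2 := by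
    intro q hq
    have hsubset : Pmin ∩ subEdges g q.1 q.2 ⊆ subBoundary g q.1 q.2 := by
      intro e he
      rw [Finset.mem_inter] at he
      have hv : e.1 ∈ edgeVerts e := by simp [edgeVerts]
      have hvS : e.1 ∈ (subEdges g q.1 q.2).biUnion edgeVerts :=
        Finset.mem_biUnion.2 ⟨e, he.2, hv⟩
      obtain ⟨f, hfm, hfB⟩ := key q hq e.1 hvS
      obtain ⟨em, -, hemu⟩ := hPminU e.1 (hvertsub _ _ _ hvS)
      rwa [(hemu e ⟨he.1, hv⟩).trans (hemu f hfm).symm]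
    refine ⟨⟨Finset.inter_subset_right, ?_⟩, hsubset⟩
    intro v hv
    obtain ⟨f, hfm, hfB⟩ := key q hq v hv
    refine ⟨f, ⟨Finset.mem_inter.2 ⟨hfm.1, hsubB _ _ hfB⟩, hfm.2⟩, ?_⟩
    rintro e ⟨heS, hve⟩
    obtain ⟨em, -, hemu⟩ := hPminU v (hvertsub _ _ _ hv)
    exact (hemu e ⟨(Finset.mem_inter.1 heS).1, hve⟩).trans (hemu f hfm).symm
  refine ⟨partA, ?_⟩
  have vdisj : ∀ q ∈ I, ∀ r ∈ I, ∀ v, v ∈ (subEdges g q.1 q.2).biUnion edgeVerts →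
      v ∈ (subEdges g r.1 r.2).biUnion edgeVerts → q = r := by
    intro q hq r hr v hvq hvr
    by_contra hqr
    have hEd : Disjoint (subEdges g q.1 q.2) (subEdges g r.1 r.2) :=
      subEdges_disjoint g (hIrange q hq).2 (hIrange r hr).2
        (hIsep (Finset.mem_coe.2 hq) (Finset.mem_coe.2 hr) hqr)
    have hdq := subBoundary_degree_two g q.1 q.2 v hvq
    have hdr := subBoundary_degree_two g r.1 r.2 v hvr
    have hdisjF : Disjoint ((subBoundary g q.1 q.2).filter (fun e => v ∈ edgeVerts e))
        ((subBoundary g r.1 r.2).filter (fun e => v ∈ edgeVerts e)) :=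
      Finset.disjoint_filter_filter (hEd.mono (hsubB _ _) (hsubB _ _))
    have hvE := hvertsub _ _ v hvq
    obtain ⟨eP, hePp, hePu⟩ := hPU v hvE
    obtain ⟨em, hemp, hemu⟩ := hPminU v hvE
    have hsub2 : ((subBoundary g q.1 q.2).filter (fun e => v ∈ edgeVerts e)) ∪
        ((subBoundary g r.1 r.2).filter (fun e => v ∈ edgeVerts e)) ⊆ {eP, em} := by
      intro f hf
      simp only [Finset.mem_insert, Finset.mem_singleton]
      rcases Finset.mem_union.1 hf with hf | hf
      · have h1 := Finset.mem_filter.1 hf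
        have hD := hDsub q hq h1.1
        rw [Finset.mem_sdiff, Finset.mem_union] at hD
        rcases hD.1 with h | h
        · exact Or.inl (hePu f ⟨h, h1.2⟩)
        · exact Or.inr (hemu f ⟨h, h1.2⟩)
      · have h1 := Finset.mem_filter.1 hf
        have hD := hDsub r hr h1.1
        rw [Finset.mem_sdiff, Finset.mem_union] at hD
        rcases hD.1 with h | h
        · exact Or.inl (hePu f ⟨h, h1.2⟩)
        · exact Or.inr (hemu f ⟨h, h1.2⟩)
    have hle := Finset.card_le_card hsub2
    rw [Finset.card_union_of_disjoint hdisjF, hdq, hdr] at hle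
    have hle2 : ({eP, em} : Finset SEdge).card ≤ 2 :=
      (Finset.card_insert_le _ _).trans (by simp)
    omega
  intro Q hQ
  constructor
  · intro e he
    rcases Finset.mem_union.1 he with he | he
    · exact hPminE (Finset.mem_sdiff.1 he).1
    · obtain ⟨r, hr, her⟩ := Finset.mem_biUnion.1 he
      exact subEdges_subset g r.1 r.2 ((hQ r hr).1 her)
  · intro v hvE
    by_cases hvq : ∃ q ∈ I, v ∈ (subEdges g q.1 q.2).biUnion edgeVerts
    · obtain ⟨q, hq, hvS⟩ := hvq
      obtain ⟨e0, he0p, he0u⟩ := (hQ q hq).2 v hvS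
      refine ⟨e0, ⟨Finset.mem_union_right _ (Finset.mem_biUnion.2 ⟨q, hq, he0p.1⟩), he0p.2⟩, ?_⟩
      rintro e ⟨heM, hve⟩
      rcases Finset.mem_union.1 heM with he | he
      · exfalso
        rw [Finset.mem_sdiff] at he
        obtain ⟨em, hemp, hemu⟩ := hPminU v hvE
        obtain ⟨f, hfm, hfB⟩ := key q hq v hvS
        have hef : e = f := (hemu e ⟨he.1, hve⟩).trans (hemu f hfm).symm
        exact he.2 (Finset.mem_biUnion.2 ⟨q, hq, hsubB _ _ (hef ▸ hfB)⟩)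
      · obtain ⟨r, hr, her⟩ := Finset.mem_biUnion.1 he
        have hvr : v ∈ (subEdges g r.1 r.2).biUnion edgeVerts :=
          Finset.mem_biUnion.2 ⟨e, (hQ r hr).1 her, hve⟩
        have hrq : r = q := vdisj r hr q hq v hvr hvS
        exact he0u e ⟨hrq ▸ her, hve⟩
    · push_neg at hvq
      obtain ⟨em, hemp, hemu⟩ := hPminU v hvE
      have hnot : em ∉ I.biUnion (fun q => subEdges g q.1 q.2) := by
        intro hmem
        obtain ⟨r, hr, her⟩ := Finset.mem_biUnion.1 hmem
        exact hvq r hr (Finset.mem_biUnion.2 ⟨em, her, hemp.2⟩)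
      refine ⟨em, ⟨Finset.mem_union_left _ (Finset.mem_sdiff.2 ⟨hemp.1, hnot⟩), hemp.2⟩, ?_⟩
      rintro e ⟨heM, hve⟩
      rcases Finset.mem_union.1 heM with he | he
      · exact hemu e ⟨(Finset.mem_sdiff.1 he).1, hve⟩
      · exfalso
        obtain ⟨r, hr, her⟩ := Finset.mem_biUnion.1 he
        exact hvq r hr (Finset.mem_biUnion.2 ⟨e, (hQ r hr).1 her, hve⟩)
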